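/- Let G=(V,E) be a finite simple graph and U ⊆ V an independent set, and let G' = G[N_G[U]] be the subgraph induced by the closed neighborhood of U. Then the minimum of |S' ∩ U| over all independent dominating sets S' of G' equals |U| − opt_MaxExtVC(G,U). -/

import Mathlib

/-- `S` is a vertex cover of `G`: every edge has an endpoint in `S`. -/
def IsVertexCover {V : Type*} (G : SimpleGraph V) (S : Set V) : Prop :=
  ∀ ⦃u v : V⦄, G.Adj u v → u ∈ S ∨ v ∈ S

/-- `S` is a minimal vertex cover of `G`: no proper subset is a vertex cover. -/
def IsMinimalVertexCover {V : Type*} (G : SimpleGraph V) (S : Set V) : Prop :=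
  IsVertexCover G S ∧ ∀ T : Set V, T ⊂ S → ¬ IsVertexCover G T

/-- `S` is an independent set of `G`: pairwise non-adjacent vertices. -/
def IsIndepSet {V : Type*} (G : SimpleGraph V) (S : Set V) : Prop :=
  ∀ ⦃u v : V⦄, u ∈ S → v ∈ S → ¬ G.Adj u v

/-- `S` is a maximal independent set of `G`: no proper superset is independent. -/
def IsMaximalIndepSet {V : Type*} (G : SimpleGraph V) (S : Set V) : Prop :=
  IsIndepSet G S ∧ ∀ T : Set V, S ⊂ T → ¬ IsIndepSet G T

/-- `(G, U)` is a yes-instance of Ext VC: some minimal vertex cover contains `U`. -/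
def ExtVC {V : Type*} (G : SimpleGraph V) (U : Set V) : Prop :=
  ∃ S : Set V, U ⊆ S ∧ IsMinimalVertexCover G S

/-- `(G, U)` is a yes-instance of Ext IS: some maximal independent set is contained in `U`. -/
def ExtIS {V : Type*} (G : SimpleGraph V) (U : Set V) : Prop :=
  ∃ S : Set V, S ⊆ U ∧ IsMaximalIndepSet G S

/-- The closed neighborhood `N_G[U]` of a set `U` of vertices. -/
def closedNbhd {V : Type*} (G : SimpleGraph V) (U : Set V) : Set V :=
  U ∪ {v | ∃ u ∈ U, G.Adj u v}

/-- `S` is a dominating set of `G`: every vertex is in `S` or adjacent to a vertex of `S`. -/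
def IsDominating {V : Type*} (G : SimpleGraph V) (S : Set V) : Prop :=
  ∀ v : V, v ∈ S ∨ ∃ u ∈ S, G.Adj u v

/-- `opt_MaxExtVC(G, U)`: the maximum of `|S ∩ U|` over all minimal vertex covers `S` of `G`. -/
noncomputable def optMaxExtVC {V : Type*} (G : SimpleGraph V) (U : Set V) : ℕ :=
  sSup {n : ℕ | ∃ S : Set V, IsMinimalVertexCover G S ∧ n = (S ∩ U).ncard}

/-- `opt_MinExtIS(G, U)`: the minimum of `|U| + |S ∩ (V \ U)|` over all maximal independent
sets `S` of `G`. -/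
noncomputable def optMinExtIS {V : Type*} (G : SimpleGraph V) (U : Set V) : ℕ :=
  sInf {n : ℕ | ∃ S : Set V, IsMaximalIndepSet G S ∧ n = U.ncard + (S ∩ Uᶜ).ncard}

lemma maxIndep_iff_dom {V : Type*} (G : SimpleGraph V) (S : Set V) :
    IsMaximalIndepSet G S ↔ IsIndepSet G S ∧ IsDominating G S := by
  constructor
  · rintro ⟨h1, h2⟩
    refine ⟨h1, fun v => ?_⟩
    by_contra hc
    push_neg at hc
    obtain ⟨hv, hadj⟩ := hc
    refine h2 (insert v S) (Set.ssubset_insert hv) ?_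
    rintro a b (rfl | ha) (rfl | hb)
    · exact fun h => G.irrefl h
    · exact fun h => hadj b hb (h.symm)
    · exact fun h => hadj a ha h
    · exact h1 ha hb
  · rintro ⟨h1, h2⟩
    refine ⟨h1, fun T hT hind => ?_⟩
    obtain ⟨v, hvT, hvS⟩ := Set.exists_of_ssubset hT
    rcases h2 v with hv | ⟨u, huS, hadj⟩
    · exact hvS hv
    · exact hind (hT.subset huS) hvT hadj

lemma exists_maximal_ext {V : Type*} [Finite V] (G : SimpleGraph V) (S : Set V)
    (hS : IsIndepSet G S) : ∃ T, S ⊆ T ∧ IsMaximalIndepSet G T := by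
  classical
  obtain ⟨T, hT, hmax⟩ := Set.Finite.exists_maximalFor (fun T => T.ncard)
    {T | S ⊆ T ∧ IsIndepSet G T} (Set.toFinite _) ⟨S, subset_rfl, hS⟩
  refine ⟨T, hT.1, hT.2, fun T' hT' hind => ?_⟩
  have h1 : T.ncard < T'.ncard := Set.ncard_lt_ncard hT' (Set.toFinite _)
  have : T'.ncard ≤ T.ncard := hmax (j := T') ⟨hT.1.trans hT'.subset, hind⟩ h1.le
  omega

lemma vc_iff_compl_indep {V : Type*} (G : SimpleGraph V) (S : Set V) :
    IsVertexCover G S ↔ IsIndepSet G Sᶜ := by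
  constructor
  · intro h u v hu hv hadj
    rcases h hadj with h' | h'
    · exact hu h'
    · exact hv h'
  · intro h u v hadj
    by_contra hc
    push_neg at hc
    exact h hc.1 hc.2 hadj

lemma minvc_iff_compl_maxIndep {V : Type*} (G : SimpleGraph V) (S : Set V) :
    IsMinimalVertexCover G S ↔ IsMaximalIndepSet G Sᶜ := by
  constructor
  · rintro ⟨h1, h2⟩
    refine ⟨(vc_iff_compl_indep G S).mp h1, fun T hT hind => ?_⟩
    refine h2 Tᶜ ⟨?_, ?_⟩ ?_
    · intro x hx
      by_contra hxS
      exact hx (hT.subset hxS)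
    · intro he
      obtain ⟨v, hvT, hvS⟩ := Set.exists_of_ssubset hT
      exact he (not_not.mp hvS) hvT
    · rw [vc_iff_compl_indep, compl_compl]
      exact hind
  · rintro ⟨h1, h2⟩
    refine ⟨by rw [vc_iff_compl_indep]; exact h1, fun T hT hvc => ?_⟩
    refine h2 Tᶜ ⟨fun x hx hxT => hx (hT.subset hxT), ?_⟩ ?_
    · intro he
      obtain ⟨v, hvS, hvT⟩ := Set.exists_of_ssubset hT
      exact he hvT hvS
    · rw [vc_iff_compl_indep] at hvc
      exact hvc

lemma inter_compl_card {V : Type*} [Fintype V] (S U : Set V) :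
    (S ∩ U).ncard + (Sᶜ ∩ U).ncard = U.ncard := by
  have h : (U ∩ S).ncard + (U \ S).ncard = U.ncard :=
    Set.ncard_inter_add_ncard_diff_eq_ncard U S (Set.toFinite _)
  have e1 : S ∩ U = U ∩ S := Set.inter_comm _ _
  have e2 : Sᶜ ∩ U = U \ S := by ext x; simp [Set.mem_diff, and_comm]
  rw [e1, e2, h]
lemma lemA {V : Type*} [Fintype V] (G : SimpleGraph V) (U : Set V)
    (S' : Set ↥(closedNbhd G U))
    (hind : IsIndepSet (G.induce (closedNbhd G U)) S')
    (hdom : IsDominating (G.induce (closedNbhd G U)) S') :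
    ∃ I : Set V, IsMaximalIndepSet G I ∧ (I ∩ U).ncard = (Subtype.val '' S' ∩ U).ncard := by
  set S : Set V := Subtype.val '' S' with hS
  have hSind : IsIndepSet G S := by
    rintro u v ⟨a, ha, rfl⟩ ⟨b, hb, rfl⟩ hadj
    exact hind ha hb hadj
  obtain ⟨I, hSI, hImax⟩ := exists_maximal_ext G S hSind
  refine ⟨I, hImax, ?_⟩
  congr 1
  apply Set.Subset.antisymm
  · rintro u ⟨huI, huU⟩
    have huN : u ∈ closedNbhd G U := Or.inl huU
    rcases hdom ⟨u, huN⟩ with h | ⟨w, hwS', hadj⟩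
    · exact ⟨⟨⟨u, huN⟩, h, rfl⟩, huU⟩
    · exact absurd hadj (hImax.1 (hSI ⟨w, hwS', rfl⟩) huI)
  · rintro u ⟨huS, huU⟩
    exact ⟨hSI huS, huU⟩

lemma lemB {V : Type*} [Fintype V] (G : SimpleGraph V) (U : Set V)
    (I : Set V) (hI : IsMaximalIndepSet G I) :
    ∃ S' : Set ↥(closedNbhd G U),
      IsIndepSet (G.induce (closedNbhd G U)) S' ∧
      IsDominating (G.induce (closedNbhd G U)) S' ∧
      (Subtype.val '' S' ∩ U).ncard = (I ∩ U).ncard := by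
  set S0 : Set ↥(closedNbhd G U) := {x | (x : V) ∈ I} with hS0
  have hS0ind : IsIndepSet (G.induce (closedNbhd G U)) S0 := by
    intro a b ha hb hadj
    exact hI.1 ha hb hadj
  obtain ⟨S', hsub, hmax⟩ := exists_maximal_ext (G.induce (closedNbhd G U)) S0 hS0ind
  rw [maxIndep_iff_dom] at hmax
  refine ⟨S', hmax.1, hmax.2, ?_⟩
  congr 1
  apply Set.Subset.antisymm
  · rintro u ⟨⟨x, hxS', rfl⟩, huU⟩
    refine ⟨?_, huU⟩
    by_contra hxI
    rcases (maxIndep_iff_dom G I).mp hI |>.2 (x : V) with h | ⟨w, hwI, hadj⟩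
    · exact hxI h
    · have hwN : w ∈ closedNbhd G U := Or.inr ⟨(x : V), huU, hadj.symm⟩
      have : (⟨w, hwN⟩ : ↥(closedNbhd G U)) ∈ S' := hsub hwI
      exact hmax.1 this hxS' hadj
  · rintro u ⟨huI, huU⟩
    have huN : u ∈ closedNbhd G U := Or.inl huU
    exact ⟨⟨⟨u, huN⟩, hsub huI, rfl⟩, huU⟩
/-- Let `U` be an independent set and `G' = G[N_G[U]]`. Then the minimum of
`|S' ∩ U|` over all independent dominating sets `S'` of `G'` equals
`|U| − opt_MaxExtVC(G, U)`. -/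
theorem statement_14 {V : Type*} [Fintype V] (G : SimpleGraph V) (U : Set V)
    (hU : IsIndepSet G U) :
    sInf {n : ℕ | ∃ S' : Set ↥(closedNbhd G U),
        IsIndepSet (G.induce (closedNbhd G U)) S' ∧
        IsDominating (G.induce (closedNbhd G U)) S' ∧
        n = (Subtype.val '' S' ∩ U).ncard}
      = U.ncard - optMaxExtVC G U := by
  classical
  set B : Set ℕ := {n | ∃ I, IsMaximalIndepSet G I ∧ n = (I ∩ U).ncard} with hB
  have hBne : B.Nonempty := by
    obtain ⟨I, -, hI⟩ := exists_maximal_ext G ∅ (fun u v hu _ _ => hu.elim)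
    exact ⟨(I ∩ U).ncard, I, hI, rfl⟩
  obtain ⟨I0, hI0, hI0c⟩ := Nat.sInf_mem hBne
  have hmU : sInf B ≤ U.ncard := by
    rw [hI0c]; exact Set.ncard_le_ncard Set.inter_subset_right (Set.toFinite _)
  have hAeq : sInf {n : ℕ | ∃ S' : Set ↥(closedNbhd G U),
        IsIndepSet (G.induce (closedNbhd G U)) S' ∧
        IsDominating (G.induce (closedNbhd G U)) S' ∧
        n = (Subtype.val '' S' ∩ U).ncard} = sInf B := by
    obtain ⟨S0', hi0, hd0, hc0⟩ := lemB G U I0 hI0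
    apply le_antisymm
    · exact Nat.sInf_le ⟨S0', hi0, hd0, by rw [hc0, ← hI0c]⟩
    · refine le_csInf ⟨_, S0', hi0, hd0, rfl⟩ ?_
      rintro n ⟨S', h1, h2, rfl⟩
      obtain ⟨I, hI, hc⟩ := lemA G U S' h1 h2
      exact Nat.sInf_le ⟨I, hI, hc.symm⟩
  have hopt : optMaxExtVC G U = U.ncard - sInf B := by
    unfold optMaxExtVC
    apply le_antisymm
    · refine csSup_le ⟨(I0ᶜ ∩ U).ncard, I0ᶜ,
        (minvc_iff_compl_maxIndep G I0ᶜ).mpr (by rwa [compl_compl]), rfl⟩ ?_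
      rintro n ⟨S, hS, rfl⟩
      have hle : sInf B ≤ (Sᶜ ∩ U).ncard :=
        Nat.sInf_le ⟨Sᶜ, (minvc_iff_compl_maxIndep G S).mp hS, rfl⟩
      have hsum := inter_compl_card S U
      omega
    · have hmem : U.ncard - sInf B ∈
          {n : ℕ | ∃ S, IsMinimalVertexCover G S ∧ n = (S ∩ U).ncard} := by
        refine ⟨I0ᶜ, (minvc_iff_compl_maxIndep G I0ᶜ).mpr (by rwa [compl_compl]), ?_⟩
        have hsum := inter_compl_card I0ᶜ U
        rw [compl_compl] at hsum
        omega
      refine le_csSup ⟨U.ncard, ?_⟩ hmem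
      rintro n ⟨S, hS, rfl⟩
      exact Set.ncard_le_ncard Set.inter_subset_right (Set.toFinite _)
  rw [hAeq, hopt]
  omega
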